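/- The generating series of a partitional product of relatively tame stuff types is the Cauchy product of the generating series: (G·H)(z) = G(z)·H(z) as formal power series. -/

import Mathlib

open CategoryTheory

/-- Groupoid cardinality: sum over isomorphism classes of 1/#Aut. -/
noncomputable def chi (C : Type u) [Category.{v} C] : ℝ :=
  ∑' c : Quotient (isIsomorphicSetoid C), (1 : ℝ) / Nat.card (Aut (Quotient.out c))

/-- Tame: countably many iso classes, finite automorphism groups, convergent sum. -/
def Tame (C : Type u) [Category.{v} C] : Prop :=
  Countable (Quotient (isIsomorphicSetoid C)) ∧ (∀ x : C, Finite (Aut x)) ∧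
    Summable (fun c : Quotient (isIsomorphicSetoid C) =>
      (1 : ℝ) / Nat.card (Aut (Quotient.out c)))
/-- The degree (number of elements) of an object of the groupoid of bijections between
finite sets. -/
noncomputable def deg (S : Core FintypeCat) : ℕ :=
  Nat.card ((Core.inclusion FintypeCat).obj S)


lemma deg_eq_of_iso {S T : Core FintypeCat} (e : S ≅ T) : deg S = deg T :=
  Nat.card_congr (FintypeCat.equivEquivIso.symm ((Core.inclusion FintypeCat).mapIso e))

lemma card_aut_congr {C : Type*} [Category C] {x y : C} (e : x ≅ y) :
    Nat.card (Aut x) = Nat.card (Aut y) :=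
  Nat.card_congr (Aut.autMulEquivOfIso e).toEquiv

lemma card_aut_fullSub {C : Type*} [Category C] {P : C → Prop} (x : ObjectProperty.FullSubcategory P) :
    Nat.card (Aut x) = Nat.card (Aut x.obj) :=
  Nat.card_congr ((Functor.FullyFaithful.ofFullyFaithful (ObjectProperty.ι P)).isoEquiv)

def autProdEquiv {C D : Type*} [Category C] [Category D] (x : C) (y : D) :
    Aut ((x, y) : C × D) ≃ Aut x × Aut y where
  toFun f := (⟨f.hom.1, f.inv.1, congrArg Prod.fst f.hom_inv_id, congrArg Prod.fst f.inv_hom_id⟩,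
              ⟨f.hom.2, f.inv.2, congrArg Prod.snd f.hom_inv_id, congrArg Prod.snd f.inv_hom_id⟩)
  invFun p := ⟨(p.1.hom, p.2.hom), (p.1.inv, p.2.inv),
    Prod.ext p.1.hom_inv_id p.2.hom_inv_id, Prod.ext p.1.inv_hom_id p.2.inv_hom_id⟩
  left_inv f := rfl
  right_inv p := rfl

noncomputable def fsIso {C : Type*} [Category C] {P : C → Prop} {x y : ObjectProperty.FullSubcategory P}
    (e : x.obj ≅ y.obj) : x ≅ y := (ObjectProperty.ι P).preimageIso e

def prodIsoFst {C D : Type*} [Category C] [Category D] {p q : C × D} (e : p ≅ q) : p.1 ≅ q.1 :=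
  ⟨e.hom.1, e.inv.1, congrArg Prod.fst e.hom_inv_id, congrArg Prod.fst e.inv_hom_id⟩

def prodIsoSnd {C D : Type*} [Category C] [Category D] {p q : C × D} (e : p ≅ q) : p.2 ≅ q.2 :=
  ⟨e.hom.2, e.inv.2, congrArg Prod.snd e.hom_inv_id, congrArg Prod.snd e.inv_hom_id⟩

def prodIsoMk {C D : Type*} [Category C] [Category D] {x₁ y₁ : C} {x₂ y₂ : D}
    (e₁ : x₁ ≅ y₁) (e₂ : x₂ ≅ y₂) : ((x₁, x₂) : C × D) ≅ (y₁, y₂) :=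
  ⟨(e₁.hom, e₂.hom), (e₁.inv, e₂.inv), Prod.ext e₁.hom_inv_id e₂.hom_inv_id,
    Prod.ext e₁.inv_hom_id e₂.inv_hom_id⟩

section
variable {G : Type u} [Groupoid.{v} G] {H : Type u₂} [Groupoid.{v₂} H]
  (X : G ⥤ Core FintypeCat) (Y : H ⥤ Core FintypeCat) (n : ℕ)

noncomputable def Fwd :
    Quotient (isIsomorphicSetoid
        (ObjectProperty.FullSubcategory fun p : G × H => deg (X.obj p.1) + deg (Y.obj p.2) = n)) →
      Σ p : Finset.HasAntidiagonal.antidiagonal n,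
        Quotient (isIsomorphicSetoid (ObjectProperty.FullSubcategory fun g : G => deg (X.obj g) = p.1.1)) ×
        Quotient (isIsomorphicSetoid (ObjectProperty.FullSubcategory fun h : H => deg (Y.obj h) = p.1.2)) :=
  fun c => ⟨⟨(deg (X.obj c.out.obj.1), deg (Y.obj c.out.obj.2)),
      Finset.HasAntidiagonal.mem_antidiagonal.mpr c.out.property⟩,
    ⟦⟨c.out.obj.1, rfl⟩⟧, ⟦⟨c.out.obj.2, rfl⟩⟧⟩

noncomputable def Bwd :
    (Σ p : Finset.HasAntidiagonal.antidiagonal n,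
        Quotient (isIsomorphicSetoid (ObjectProperty.FullSubcategory fun g : G => deg (X.obj g) = p.1.1)) ×
        Quotient (isIsomorphicSetoid (ObjectProperty.FullSubcategory fun h : H => deg (Y.obj h) = p.1.2))) →
      Quotient (isIsomorphicSetoid
        (ObjectProperty.FullSubcategory fun p : G × H => deg (X.obj p.1) + deg (Y.obj p.2) = n)) :=
  fun t => ⟦⟨(t.2.1.out.obj, t.2.2.out.obj), by
    rw [t.2.1.out.property, t.2.2.out.property]; exact Finset.HasAntidiagonal.mem_antidiagonal.mp t.1.2⟩⟧

lemma Fwd_mk (x : ObjectProperty.FullSubcategory fun p : G × H => deg (X.obj p.1) + deg (Y.obj p.2) = n)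
    {i j : ℕ} (g : ObjectProperty.FullSubcategory fun g : G => deg (X.obj g) = i)
    (h' : ObjectProperty.FullSubcategory fun h : H => deg (Y.obj h) = j)
    (e₁ : x.obj.1 ≅ g.obj) (e₂ : x.obj.2 ≅ h'.obj) (hmem : (i, j) ∈ Finset.HasAntidiagonal.antidiagonal n) :
    Fwd X Y n ⟦x⟧ = ⟨⟨(i, j), hmem⟩, ⟦g⟧, ⟦h'⟧⟩ := by
  have hrel := Quotient.exact (Quotient.out_eq (Quotient.mk (isIsomorphicSetoid _) x))
  obtain ⟨e⟩ : CategoryTheory.IsIsomorphic (Quotient.out ⟦x⟧) x := hrel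
  set y := Quotient.out ⟦x⟧ with hy
  have f₁ : y.obj.1 ≅ g.obj :=
    prodIsoFst ((ObjectProperty.ι _).mapIso e) ≪≫ e₁
  have f₂ : y.obj.2 ≅ h'.obj :=
    prodIsoSnd ((ObjectProperty.ι _).mapIso e) ≪≫ e₂
  have hi : deg (X.obj y.obj.1) = i := (deg_eq_of_iso (X.mapIso f₁)).trans g.property
  have hj : deg (Y.obj y.obj.2) = j := (deg_eq_of_iso (Y.mapIso f₂)).trans h'.property
  subst hi hj
  exact Sigma.ext rfl (heq_of_eq
    (Prod.ext (Quotient.sound ⟨fsIso f₁⟩) (Quotient.sound ⟨fsIso f₂⟩)))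

end

section
variable {G : Type u} [Groupoid.{v} G] {H : Type u₂} [Groupoid.{v₂} H]
  (X : G ⥤ Core FintypeCat) (Y : H ⥤ Core FintypeCat) (n : ℕ)

noncomputable def E :
    Quotient (isIsomorphicSetoid
        (ObjectProperty.FullSubcategory fun p : G × H => deg (X.obj p.1) + deg (Y.obj p.2) = n)) ≃
      Σ p : Finset.HasAntidiagonal.antidiagonal n,
        Quotient (isIsomorphicSetoid (ObjectProperty.FullSubcategory fun g : G => deg (X.obj g) = p.1.1)) ×
        Quotient (isIsomorphicSetoid (ObjectProperty.FullSubcategory fun h : H => deg (Y.obj h) = p.1.2)) where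
  toFun := Fwd X Y n
  invFun := Bwd X Y n
  left_inv c := by
    conv_rhs => rw [← Quotient.out_eq c]
    apply Quotient.sound
    have h₁ := Quotient.exact (Quotient.out_eq
      (Quotient.mk (isIsomorphicSetoid _) (⟨c.out.obj.1, rfl⟩ :
        ObjectProperty.FullSubcategory fun g : G => deg (X.obj g) = deg (X.obj c.out.obj.1))))
    have h₂ := Quotient.exact (Quotient.out_eq
      (Quotient.mk (isIsomorphicSetoid _) (⟨c.out.obj.2, rfl⟩ :
        ObjectProperty.FullSubcategory fun h : H => deg (Y.obj h) = deg (Y.obj c.out.obj.2))))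
    obtain ⟨e₁⟩ := h₁
    obtain ⟨e₂⟩ := h₂
    exact ⟨fsIso (prodIsoMk ((ObjectProperty.ι _).mapIso e₁)
      ((ObjectProperty.ι _).mapIso e₂))⟩
  right_inv t := by
    obtain ⟨⟨⟨i, j⟩, hmem⟩, a, b⟩ := t
    have := Fwd_mk X Y n
      (⟨(a.out.obj, b.out.obj), by
        rw [a.out.property, b.out.property]; exact Finset.HasAntidiagonal.mem_antidiagonal.mp hmem⟩)
      a.out b.out (Iso.refl _) (Iso.refl _) hmem
    rw [show Bwd X Y n ⟨⟨(i, j), hmem⟩, a, b⟩ = ⟦⟨(a.out.obj, b.out.obj), _⟩⟧ from rfl, this,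
      Quotient.out_eq, Quotient.out_eq]

end

lemma tsum_prod_div {α β : Type*} (u : α → ℝ) (v : β → ℝ) (hu : Summable u) (hv : Summable v)
    (h : Summable fun x : α × β => u x.1 * v x.2) :
    ∑' x : α × β, u x.1 * v x.2 = (∑' a, u a) * ∑' b, v b := by
  have h2 : ∀ a : α, Summable fun b : β => u a * v b := fun a => hv.mul_left (u a)
  rw [Summable.tsum_prod' h h2]
  simp_rw [tsum_mul_left]
  exact tsum_mul_right

section
variable {G : Type u} [Groupoid.{v} G] {H : Type u₂} [Groupoid.{v₂} H]
  (X : G ⥤ Core FintypeCat) (Y : H ⥤ Core FintypeCat) (n : ℕ)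

lemma card_bwd (t : Σ p : Finset.HasAntidiagonal.antidiagonal n,
      Quotient (isIsomorphicSetoid (ObjectProperty.FullSubcategory fun g : G => deg (X.obj g) = p.1.1)) ×
      Quotient (isIsomorphicSetoid (ObjectProperty.FullSubcategory fun h : H => deg (Y.obj h) = p.1.2))) :
    (1 : ℝ) / Nat.card (Aut (Quotient.out (Bwd X Y n t))) =
      (1 : ℝ) / Nat.card (Aut (Quotient.out t.2.1)) *
        ((1 : ℝ) / Nat.card (Aut (Quotient.out t.2.2))) := by
  have hz : Bwd X Y n t = ⟦(⟨(t.2.1.out.obj, t.2.2.out.obj), by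
      rw [t.2.1.out.property, t.2.2.out.property]
      exact Finset.HasAntidiagonal.mem_antidiagonal.mp t.1.2⟩ :
    ObjectProperty.FullSubcategory fun p : G × H => deg (X.obj p.1) + deg (Y.obj p.2) = n)⟧ := rfl
  obtain ⟨e⟩ : CategoryTheory.IsIsomorphic (Quotient.out (Bwd X Y n t)) _ :=
    Quotient.exact (hz ▸ Quotient.out_eq (Bwd X Y n t))
  have hcard : Nat.card (Aut (Quotient.out (Bwd X Y n t))) =
      Nat.card (Aut (Quotient.out t.2.1)) * Nat.card (Aut (Quotient.out t.2.2)) := by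
    rw [card_aut_congr e, card_aut_fullSub, card_aut_fullSub t.2.1.out,
      card_aut_fullSub t.2.2.out]
    exact (Nat.card_congr (autProdEquiv t.2.1.out.obj t.2.2.out.obj)).trans (Nat.card_prod _ _)
  rw [hcard, Nat.cast_mul, div_mul_div_comm, one_mul]

set_option maxHeartbeats 4000000 in
lemma chi_eq
    (hG : ∀ i : ℕ, Tame (ObjectProperty.FullSubcategory fun g : G => deg (X.obj g) = i))
    (hH : ∀ j : ℕ, Tame (ObjectProperty.FullSubcategory fun h : H => deg (Y.obj h) = j)) :
    chi (ObjectProperty.FullSubcategory fun p : G × H => deg (X.obj p.1) + deg (Y.obj p.2) = n) =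
      ∑ p ∈ Finset.HasAntidiagonal.antidiagonal n,
        chi (ObjectProperty.FullSubcategory fun g : G => deg (X.obj g) = p.1) *
          chi (ObjectProperty.FullSubcategory fun h : H => deg (Y.obj h) = p.2) := by
  classical
  have hfib : ∀ p : Finset.HasAntidiagonal.antidiagonal n,
      Summable (fun ab :
          Quotient (isIsomorphicSetoid (ObjectProperty.FullSubcategory fun g : G => deg (X.obj g) = p.1.1)) ×
          Quotient (isIsomorphicSetoid (ObjectProperty.FullSubcategory fun h : H => deg (Y.obj h) = p.1.2)) =>
        ((1 : ℝ) / Nat.card (Aut (Quotient.out ab.1))) *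
          ((1 : ℝ) / Nat.card (Aut (Quotient.out ab.2)))) := fun p =>
    Summable.mul_of_nonneg (hG p.1.1).2.2 (hH p.1.2).2.2
      (fun _ => by positivity) (fun _ => by positivity)
  have key := Equiv.tsum_eq (E X Y n).symm
    (fun c : Quotient (isIsomorphicSetoid
        (ObjectProperty.FullSubcategory fun p : G × H => deg (X.obj p.1) + deg (Y.obj p.2) = n)) =>
      (1 : ℝ) / Nat.card (Aut (Quotient.out c)))
  rw [chi, ← key]
  have hval : ∀ t, (1 : ℝ) / Nat.card (Aut (Quotient.out ((E X Y n).symm t))) =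
      ((1 : ℝ) / Nat.card (Aut (Quotient.out t.2.1))) *
        ((1 : ℝ) / Nat.card (Aut (Quotient.out t.2.2))) := fun t => card_bwd X Y n t
  rw [tsum_congr hval]
  have hsig : Summable (fun t : Σ p : Finset.HasAntidiagonal.antidiagonal n,
      Quotient (isIsomorphicSetoid (ObjectProperty.FullSubcategory fun g : G => deg (X.obj g) = p.1.1)) ×
      Quotient (isIsomorphicSetoid (ObjectProperty.FullSubcategory fun h : H => deg (Y.obj h) = p.1.2)) =>
        ((1 : ℝ) / Nat.card (Aut (Quotient.out t.2.1))) *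
          ((1 : ℝ) / Nat.card (Aut (Quotient.out t.2.2)))) :=
    (summable_sigma_of_nonneg (fun t => by positivity)).mpr
      ⟨fun p => hfib p, Summable.of_finite⟩
  rw [Summable.tsum_sigma' (fun p => hfib p) hsig, tsum_fintype,
    ← Finset.sum_coe_sort (s := Finset.HasAntidiagonal.antidiagonal n)
      (f := fun p => chi (ObjectProperty.FullSubcategory fun g : G => deg (X.obj g) = p.1) *
        chi (ObjectProperty.FullSubcategory fun h : H => deg (Y.obj h) = p.2))]
  refine Finset.sum_congr rfl fun p _ => ?_
  exact tsum_prod_div _ _ (hG p.1.1).2.2 (hH p.1.2).2.2 (hfib p)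

end

/-- The generating series of a partitional product of relatively tame stuff types is the
Cauchy product of the generating series. -/
theorem generatingSeries_partitionalProduct
    {G : Type u} [Groupoid.{v} G] {H : Type u₂} [Groupoid.{v₂} H]
    (X : G ⥤ Core FintypeCat) (Y : H ⥤ Core FintypeCat)
    (hG : ∀ n : ℕ, Tame (ObjectProperty.FullSubcategory fun g : G => deg (X.obj g) = n))
    (hH : ∀ n : ℕ, Tame (ObjectProperty.FullSubcategory fun h : H => deg (Y.obj h) = n)) :
    PowerSeries.mk (fun n : ℕ =>
        chi (ObjectProperty.FullSubcategory fun p : G × H => deg (X.obj p.1) + deg (Y.obj p.2) = n)) =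
      PowerSeries.mk (fun n : ℕ => chi (ObjectProperty.FullSubcategory fun g : G => deg (X.obj g) = n)) *
        PowerSeries.mk (fun n : ℕ => chi (ObjectProperty.FullSubcategory fun h : H => deg (Y.obj h) = n)) := by
  ext n
  rw [PowerSeries.coeff_mk, PowerSeries.coeff_mul]
  simp only [PowerSeries.coeff_mk]
  exact chi_eq X Y n hG hH
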